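/- Let m ≥ 1 and n be integers with n ≥ 3^{m+1}(m+1). Then C(n−3,m) < g_n(m,n−m). -/

import Mathlib

open Finset

/-- A maximal chain in the Boolean lattice of subsets of `[n] = {1, …, n}`:
`∅ = c 0 ⊂ c 1 ⊂ ⋯ ⊂ c n = [n]` with `|c i| = i`. -/
def IsMaxChainIn (n : ℕ) (c : ℕ → Finset ℕ) : Prop :=
  (∀ i ≤ n, (c i).card = i) ∧ (∀ i < n, c i ⊆ c (i + 1)) ∧ c n = Finset.Icc 1 n

/-- A cutset in `2^{[n]}`: a collection of subsets of `[n]` meeting every maximal chain. -/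
def IsCutsetIn (n : ℕ) (C : Finset (Finset ℕ)) : Prop :=
  (∀ A ∈ C, A ⊆ Finset.Icc 1 n) ∧
    ∀ c : ℕ → Finset ℕ, IsMaxChainIn n c → ∃ i ≤ n, c i ∈ C

/-- `gcut n m l`: the smallest `k` such that there is a cutset in `2^{[n]}` containing
exactly `k` subsets of size `i` for each `m ≤ i ≤ l` and no subsets of any other size. -/
noncomputable def gcut (n m l : ℕ) : ℕ :=
  sInf {k : ℕ | ∃ C : Finset (Finset ℕ), IsCutsetIn n C ∧
    (∀ A ∈ C, m ≤ A.card ∧ A.card ≤ l) ∧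
    ∀ i : ℕ, m ≤ i → i ≤ l → (C.filter fun A => A.card = i).card = k}

attribute [-instance] instDecidableEqFin

open Finset Finset.Colex

variable {N : ℕ}

lemma bounded_of_mem_initSeg {s t : Finset (Fin N)} {a : Fin N} (ht : t ∈ initSeg s)
    (hb : ∀ x ∈ s, x ≤ a) : ∀ x ∈ t, x ≤ a := by
  rw [mem_initSeg] at ht
  exact Colex.forall_le_mono ht.2 hb

lemma not_mem_of_mem_initSeg_erase_max' {s t : Finset (Fin N)} (hs : s.Nonempty)
    (ht : t ∈ initSeg (s.erase (s.max' hs))) : s.max' hs ∉ t := by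
  set a := s.max' hs with ha
  intro hat
  rcases (s.erase a).eq_empty_or_nonempty with he | hne
  · rw [he] at ht
    rw [mem_initSeg] at ht
    have : t = ∅ := card_eq_zero.1 (by simpa using ht.1.symm)
    rw [this] at hat; simp at hat
  · have hx := bounded_of_mem_initSeg (a := (s.erase a).max' hne) ht
      (fun b hb => (s.erase a).le_max' b hb) a hat
    have hmax : (s.erase a).max' hne < a := by
      have h1 := (s.erase a).max'_mem hne
      have h2 := mem_erase.1 h1
      exact lt_of_le_of_ne (s.le_max' _ h2.2) h2.1
    exact absurd hx (not_le.2 hmax)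

-- split lemma
lemma initSeg_split (s : Finset (Fin N)) (hs : s.Nonempty) :
    (initSeg s).card
      = (s.max' hs : ℕ).choose s.card + (initSeg (s.erase (s.max' hs))).card := by
  classical
  set a := s.max' hs with ha
  have hamem : a ∈ s := s.max'_mem hs
  have h1 : initSeg s = (Finset.powersetCard s.card (Finset.Iio a)) ∪
      (initSeg (s.erase a)).image (insert a) := by
    ext t
    constructor
    · intro ht
      obtain ⟨hcard, hle⟩ := mem_initSeg.1 ht
      rw [mem_union]
      by_cases hat : a ∈ t
      · right
        rw [mem_image]
        refine ⟨t.erase a, mem_initSeg.2 ⟨?_, ?_⟩, ?_⟩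
        · rw [card_erase_of_mem hat, card_erase_of_mem hamem, hcard]
        · have := (toColex_sdiff_le_toColex_sdiff (u := {a}) (s := t) (t := s)
            (by simpa using hat) (by simpa using hamem)).2 hle
          simpa [sdiff_singleton_eq_erase] using this
        · exact insert_erase hat
      · left
        rw [mem_powersetCard]
        refine ⟨fun x hxt => ?_, hcard.symm⟩
        have hx := Colex.forall_le_mono (a := a) hle (fun b hb => s.le_max' b hb) x hxt
        exact mem_Iio.2 (lt_of_le_of_ne hx (fun h => hat (h ▸ hxt)))
    · intro ht
      rw [mem_union] at ht
      rcases ht with ht | ht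
      · obtain ⟨hsub, hcard⟩ := mem_powersetCard.1 ht
        refine mem_initSeg.2 ⟨hcard.symm, ?_⟩
        rcases eq_or_ne t s with rfl | hne
        · exact le_refl _
        · refine le_of_lt (toColex_lt_toColex_iff_exists_forall_lt.2 ⟨a, hamem, ?_, ?_⟩)
          · intro hat; exact absurd (mem_Iio.1 (hsub hat)) (lt_irrefl a)
          · intro b hbt _; exact mem_Iio.1 (hsub hbt)
      · obtain ⟨t', ht', rfl⟩ := mem_image.1 ht
        have hat' : a ∉ t' := not_mem_of_mem_initSeg_erase_max' hs ht'
        obtain ⟨hcard', hle'⟩ := mem_initSeg.1 ht'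
        refine mem_initSeg.2 ⟨?_, ?_⟩
        · rw [card_insert_of_notMem hat']
          rw [card_erase_of_mem hamem] at hcard'
          have := Finset.card_pos.2 hs
          omega
        · have : toColex (insert a t') ≤ toColex (insert a (s.erase a)) := by
            have h2 := toColex_sdiff_le_toColex_sdiff (u := {a})
              (s := insert a t') (t := insert a (s.erase a))
              (by simp) (by simp)
            rw [sdiff_singleton_eq_erase, sdiff_singleton_eq_erase,
              erase_insert hat', erase_insert (notMem_erase a s)] at h2
            exact h2.1 hle'
          rwa [insert_erase hamem] at this
  have hdisj : Disjoint (Finset.powersetCard s.card (Finset.Iio a))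
      ((initSeg (s.erase a)).image (insert a)) := by
    rw [disjoint_left]
    rintro t ht1 ht2
    rw [mem_powersetCard] at ht1
    obtain ⟨t', _, rfl⟩ := mem_image.1 ht2
    exact absurd (mem_Iio.1 (ht1.1 (mem_insert_self a t'))) (lt_irrefl a)
  rw [h1, card_union_of_disjoint hdisj, card_powersetCard]
  have hIio : (Finset.Iio a).card = (a : ℕ) := by simp
  rw [hIio]
  congr 1
  apply card_image_of_injOn
  intro x hx y hy hxy
  have hax : a ∉ x := not_mem_of_mem_initSeg_erase_max' hs hx
  have hay : a ∉ y := not_mem_of_mem_initSeg_erase_max' hs hy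
  have := congrArg (fun u => Finset.erase u a) hxy
  simpa [erase_insert hax, erase_insert hay] using this

@[simp] lemma initSeg_empty_card : (initSeg (∅ : Finset (Fin N))).card = 1 := by
  have : initSeg (∅ : Finset (Fin N)) = {∅} := by
    ext t
    simp only [mem_initSeg, mem_singleton]
    constructor
    · rintro ⟨h1, _⟩
      exact (card_eq_zero.1 (by simpa using h1.symm))
    · rintro rfl; simp
  rw [this, card_singleton]

open scoped FinsetFamily

section Shapes

variable {N : ℕ}

lemma attachFin_nonempty (s : Finset ℕ) (h : ∀ x ∈ s, x < N) (hne : s.Nonempty) :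
    (s.attachFin h).Nonempty := by
  rw [← Finset.card_pos, Finset.card_attachFin]
  exact Finset.card_pos.2 hne

lemma attachFin_max' (s : Finset ℕ) (h : ∀ x ∈ s, x < N) (hne : s.Nonempty) :
    (((s.attachFin h).max' (attachFin_nonempty s h hne)) : ℕ) = s.max' hne := by
  apply le_antisymm
  · apply Finset.le_max'
    have := (s.attachFin h).max'_mem (attachFin_nonempty s h hne)
    rwa [Finset.mem_attachFin] at this
  · have hmem : s.max' hne ∈ s := s.max'_mem hne
    have : (⟨s.max' hne, h _ hmem⟩ : Fin N) ∈ s.attachFin h := by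
      rw [Finset.mem_attachFin]; exact hmem
    exact (s.attachFin h).le_max' _ this

lemma attachFin_erase (s : Finset ℕ) (h : ∀ x ∈ s, x < N) (a : Fin N) :
    (s.attachFin h).erase a = (s.erase (a : ℕ)).attachFin
      (fun x hx => h x (Finset.mem_of_mem_erase hx)) := by
  ext x
  simp only [Finset.mem_erase, Finset.mem_attachFin, ne_eq, ← Fin.val_inj]

lemma card_initSeg_block (d : ℕ) : ∀ (l g : ℕ) (hg : g ≤ N) (hd : g = l + d),
    (initSeg ((Finset.Ico l g).attachFin
      (fun x hx => lt_of_lt_of_le (Finset.mem_Ico.1 hx).2 hg))).card = g.choose d := by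
  induction d with
  | zero =>
    intro l g hg hd
    have h0 : (Finset.Ico l g).attachFin
        (fun x hx => lt_of_lt_of_le (Finset.mem_Ico.1 hx).2 hg) = (∅ : Finset (Fin N)) := by
      ext x
      simp only [Finset.mem_attachFin, Finset.mem_Ico, Finset.notMem_empty, iff_false]
      omega
    rw [h0, initSeg_empty_card]
    simp
  | succ d ih =>
    intro l g hg hd
    obtain ⟨g', rfl⟩ : ∃ g', g = g' + 1 := ⟨g - 1, by omega⟩
    have hne : (Finset.Ico l (g' + 1)).Nonempty := by
      rw [Finset.nonempty_Ico]; omega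
    have hmax : (Finset.Ico l (g' + 1)).max' hne = g' := by
      apply le_antisymm
      · apply Finset.max'_le
        intro y hy
        have := (Finset.mem_Ico.1 hy).2; omega
      · apply Finset.le_max'
        rw [Finset.mem_Ico]; omega
    set S := (Finset.Ico l (g' + 1)).attachFin
      (fun x hx => lt_of_lt_of_le (Finset.mem_Ico.1 hx).2 hg) with hS
    have hSne : S.Nonempty := attachFin_nonempty _ _ hne
    rw [initSeg_split S hSne]
    have hval : ((S.max' hSne) : ℕ) = g' := by
      have h2 := attachFin_max' (Finset.Ico l (g' + 1))
        (fun x hx => lt_of_lt_of_le (Finset.mem_Ico.1 hx).2 hg) hne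
      rw [hmax] at h2
      exact h2
    have hcardS : S.card = d + 1 := by
      rw [hS, Finset.card_attachFin, Nat.card_Ico]; omega
    have herase : S.erase (S.max' hSne) = (Finset.Ico l g').attachFin
        (fun x hx => lt_of_lt_of_le (Finset.mem_Ico.1 hx).2 (by omega)) := by
      rw [attachFin_erase]
      congr 1
      ext x
      simp only [Finset.mem_erase, Finset.mem_Ico, hval]
      omega
    rw [herase, ih l g' (by omega) (by omega), hval, hcardS,
      Nat.choose_succ_succ g' d]
    simp only [Nat.succ_eq_add_one]
    omega

end Shapes

section Shapes2
variable {N : ℕ}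

lemma attachFin_min' (s : Finset ℕ) (h : ∀ x ∈ s, x < N) (hne : s.Nonempty) :
    (((s.attachFin h).min' (attachFin_nonempty s h hne)) : ℕ) = s.min' hne := by
  apply le_antisymm
  · have hmem : s.min' hne ∈ s := s.min'_mem hne
    have : (⟨s.min' hne, h _ hmem⟩ : Fin N) ∈ s.attachFin h := by
      rw [Finset.mem_attachFin]; exact hmem
    exact (s.attachFin h).min'_le _ this
  · apply Finset.min'_le
    have := (s.attachFin h).min'_mem (attachFin_nonempty s h hne)
    rwa [Finset.mem_attachFin] at this

lemma card_initSeg_shape2 (l b a : ℕ) (hlb : l ≤ b) (hba : b < a) (haN : a < N) :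
    (initSeg ((insert a (Finset.Ico l b)).attachFin
      (fun x hx => by
        rcases Finset.mem_insert.1 hx with rfl | hx
        · exact haN
        · have := (Finset.mem_Ico.1 hx).2; omega))).card
      = a.choose (b - l + 1) + b.choose (b - l) := by
  set s : Finset ℕ := insert a (Finset.Ico l b) with hs
  have hproof : ∀ x ∈ s, x < N := fun x hx => by
    rcases Finset.mem_insert.1 hx with rfl | hx
    · exact haN
    · have := (Finset.mem_Ico.1 hx).2; omega
  have hsne : s.Nonempty := ⟨a, Finset.mem_insert_self _ _⟩
  have hmax : s.max' hsne = a := by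
    apply le_antisymm
    · apply Finset.max'_le
      intro y hy
      rcases Finset.mem_insert.1 hy with rfl | hy
      · exact le_refl _
      · have := (Finset.mem_Ico.1 hy).2; omega
    · exact Finset.le_max' _ _ (Finset.mem_insert_self _ _)
  set S := s.attachFin hproof with hS
  have hSne : S.Nonempty := attachFin_nonempty _ _ hsne
  rw [initSeg_split S hSne]
  have hval : ((S.max' hSne) : ℕ) = a := by
    have h2 := attachFin_max' s hproof hsne
    rw [hmax] at h2; exact h2
  have hcardS : S.card = b - l + 1 := by
    rw [hS, Finset.card_attachFin, hs, Finset.card_insert_of_notMem, Nat.card_Ico]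
    simp only [Finset.mem_Ico]; omega
  have herase : S.erase (S.max' hSne) = (Finset.Ico l b).attachFin
      (fun x hx => by have := (Finset.mem_Ico.1 hx).2; omega) := by
    rw [attachFin_erase]
    congr 1
    ext x
    simp only [Finset.mem_erase, hval, hs, Finset.mem_insert, Finset.mem_Ico]
    omega
  rw [herase, card_initSeg_block (b - l) l b (by omega) (by omega), hval, hcardS]

lemma card_initSeg_shape3 (l g b a : ℕ) (hlg : l ≤ g) (hgb : g < b) (hba : b < a)
    (haN : a < N) :
    (initSeg ((insert a (insert b (Finset.Ico l g))).attachFin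
      (fun x hx => by
        rcases Finset.mem_insert.1 hx with rfl | hx
        · exact haN
        rcases Finset.mem_insert.1 hx with rfl | hx
        · omega
        · have := (Finset.mem_Ico.1 hx).2; omega))).card
      = a.choose (g - l + 2) + (b.choose (g - l + 1) + g.choose (g - l)) := by
  set s : Finset ℕ := insert a (insert b (Finset.Ico l g)) with hs
  have hproof : ∀ x ∈ s, x < N := fun x hx => by
    rcases Finset.mem_insert.1 hx with rfl | hx
    · exact haN
    rcases Finset.mem_insert.1 hx with rfl | hx
    · omega
    · have := (Finset.mem_Ico.1 hx).2; omega
  have hsne : s.Nonempty := ⟨a, Finset.mem_insert_self _ _⟩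
  have hmax : s.max' hsne = a := by
    apply le_antisymm
    · apply Finset.max'_le
      intro y hy
      rcases Finset.mem_insert.1 hy with rfl | hy
      · exact le_refl _
      rcases Finset.mem_insert.1 hy with rfl | hy
      · omega
      · have := (Finset.mem_Ico.1 hy).2; omega
    · exact Finset.le_max' _ _ (Finset.mem_insert_self _ _)
  set S := s.attachFin hproof with hS
  have hSne : S.Nonempty := attachFin_nonempty _ _ hsne
  rw [initSeg_split S hSne]
  have hval : ((S.max' hSne) : ℕ) = a := by
    have h2 := attachFin_max' s hproof hsne
    rw [hmax] at h2; exact h2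
  have hcardS : S.card = g - l + 2 := by
    rw [hS, Finset.card_attachFin, hs, Finset.card_insert_of_notMem,
      Finset.card_insert_of_notMem, Nat.card_Ico]
    · simp only [Finset.mem_Ico]; omega
    · simp only [Finset.mem_insert, Finset.mem_Ico]; omega
  have herase : S.erase (S.max' hSne) = ((insert b (Finset.Ico l g)).attachFin
      (fun x hx => by
        rcases Finset.mem_insert.1 hx with rfl | hx
        · omega
        · have := (Finset.mem_Ico.1 hx).2; omega)) := by
    rw [attachFin_erase]
    congr 1
    ext x
    simp only [Finset.mem_erase, hval, hs, Finset.mem_insert, Finset.mem_Ico]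
    omega
  rw [herase, card_initSeg_shape2 l g b (by omega) (by omega) (by omega), hval, hcardS]

end Shapes2

section KKlemmas
variable {N : ℕ}

lemma kk2 (l b a q : ℕ) (hq : b = l + q + 1) (hba : b < a) (haN : a < N)
    {𝒜 : Finset (Finset (Fin N))} (h𝒜 : (𝒜 : Set (Finset (Fin N))).Sized (q + 2))
    (hcard : a.choose (q + 2) + b.choose (q + 1) ≤ 𝒜.card) :
    a.choose (q + 1) + b.choose q ≤ (∂ 𝒜).card := by
  classical
  set s : Finset ℕ := insert a (Finset.Ico l b) with hs
  have hproof : ∀ x ∈ s, x < N := fun x hx => by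
    rcases Finset.mem_insert.1 hx with rfl | hx
    · exact haN
    · have := (Finset.mem_Ico.1 hx).2; omega
  set S := s.attachFin hproof with hS
  have hsne : s.Nonempty := ⟨a, Finset.mem_insert_self _ _⟩
  have hSne : S.Nonempty := attachFin_nonempty _ _ hsne
  have hcardS : S.card = q + 2 := by
    rw [hS, Finset.card_attachFin, hs, Finset.card_insert_of_notMem, Nat.card_Ico]
    · omega
    · simp only [Finset.mem_Ico]; omega
  have hcount : (initSeg S).card = a.choose (q + 2) + b.choose (q + 1) := by
    have := card_initSeg_shape2 (N := N) l b a (by omega) hba haN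
    rw [show b - l + 1 = q + 2 by omega, show b - l = q + 1 by omega] at this
    exact this
  have hmin : s.min' hsne = l := by
    apply le_antisymm
    · exact Finset.min'_le _ _ (by
        rw [hs]; exact Finset.mem_insert_of_mem (Finset.mem_Ico.2 (by omega)))
    · apply Finset.le_min'
      intro y hy
      rcases Finset.mem_insert.1 hy with rfl | hy
      · omega
      · exact (Finset.mem_Ico.1 hy).1
  have hminval : ((S.min' hSne) : ℕ) = l := by
    have h2 := attachFin_min' s hproof hsne
    rw [hmin] at h2; exact h2
  have herase : S.erase (S.min' hSne) = ((insert a (Finset.Ico (l + 1) b)).attachFin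
      (fun x hx => by
        rcases Finset.mem_insert.1 hx with rfl | hx
        · exact haN
        · have := (Finset.mem_Ico.1 hx).2; omega)) := by
    rw [attachFin_erase]
    congr 1
    ext x
    simp only [Finset.mem_erase, hminval, hs, Finset.mem_insert, Finset.mem_Ico]
    omega
  have hshadow : (∂ (initSeg S)).card = a.choose (q + 1) + b.choose q := by
    rw [Colex.shadow_initSeg hSne, herase]
    have := card_initSeg_shape2 (N := N) (l + 1) b a (by omega) hba haN
    rw [show b - (l + 1) + 1 = q + 1 by omega, show b - (l + 1) = q by omega] at this
    exact this
  have hinit : Finset.Colex.IsInitSeg (initSeg S) (q + 2) := by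
    have := isInitSeg_initSeg (s := S)
    rwa [hcardS] at this
  have := Finset.kruskal_katona h𝒜 (by rw [hcount]; exact hcard) hinit
  rw [hshadow] at this
  exact this

lemma kk3 (l g b a q : ℕ) (hq : g = l + q + 1) (hgb : g < b) (hba : b < a) (haN : a < N)
    {𝒜 : Finset (Finset (Fin N))} (h𝒜 : (𝒜 : Set (Finset (Fin N))).Sized (q + 3))
    (hcard : a.choose (q + 3) + (b.choose (q + 2) + g.choose (q + 1)) ≤ 𝒜.card) :
    a.choose (q + 2) + (b.choose (q + 1) + g.choose q) ≤ (∂ 𝒜).card := by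
  classical
  set s : Finset ℕ := insert a (insert b (Finset.Ico l g)) with hs
  have hproof : ∀ x ∈ s, x < N := fun x hx => by
    rcases Finset.mem_insert.1 hx with rfl | hx
    · exact haN
    rcases Finset.mem_insert.1 hx with rfl | hx
    · omega
    · have := (Finset.mem_Ico.1 hx).2; omega
  set S := s.attachFin hproof with hS
  have hsne : s.Nonempty := ⟨a, Finset.mem_insert_self _ _⟩
  have hSne : S.Nonempty := attachFin_nonempty _ _ hsne
  have hcardS : S.card = q + 3 := by
    rw [hS, Finset.card_attachFin, hs, Finset.card_insert_of_notMem,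
      Finset.card_insert_of_notMem, Nat.card_Ico]
    · omega
    · simp only [Finset.mem_Ico]; omega
    · simp only [Finset.mem_insert, Finset.mem_Ico]; omega
  have hcount : (initSeg S).card = a.choose (q + 3) + (b.choose (q + 2) + g.choose (q + 1)) := by
    have := card_initSeg_shape3 (N := N) l g b a (by omega) hgb hba haN
    rw [show g - l + 2 = q + 3 by omega, show g - l + 1 = q + 2 by omega,
      show g - l = q + 1 by omega] at this
    exact this
  have hmin : s.min' hsne = l := by
    apply le_antisymm
    · exact Finset.min'_le _ _ (by
        rw [hs]
        exact Finset.mem_insert_of_mem (Finset.mem_insert_of_mem (Finset.mem_Ico.2 (by omega))))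
    · apply Finset.le_min'
      intro y hy
      rcases Finset.mem_insert.1 hy with rfl | hy
      · omega
      rcases Finset.mem_insert.1 hy with rfl | hy
      · omega
      · exact (Finset.mem_Ico.1 hy).1
  have hminval : ((S.min' hSne) : ℕ) = l := by
    have h2 := attachFin_min' s hproof hsne
    rw [hmin] at h2; exact h2
  have herase : S.erase (S.min' hSne) = ((insert a (insert b (Finset.Ico (l + 1) g))).attachFin
      (fun x hx => by
        rcases Finset.mem_insert.1 hx with rfl | hx
        · exact haN
        rcases Finset.mem_insert.1 hx with rfl | hx
        · omega
        · have := (Finset.mem_Ico.1 hx).2; omega)) := by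
    rw [attachFin_erase]
    congr 1
    ext x
    simp only [Finset.mem_erase, hminval, hs, Finset.mem_insert, Finset.mem_Ico]
    omega
  have hshadow : (∂ (initSeg S)).card = a.choose (q + 2) + (b.choose (q + 1) + g.choose q) := by
    rw [Colex.shadow_initSeg hSne, herase]
    have := card_initSeg_shape3 (N := N) (l + 1) g b a (by omega) hgb hba haN
    rw [show g - (l + 1) + 2 = q + 2 by omega, show g - (l + 1) + 1 = q + 1 by omega,
      show g - (l + 1) = q by omega] at this
    exact this
  have hinit : Finset.Colex.IsInitSeg (initSeg S) (q + 3) := by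
    have := isInitSeg_initSeg (s := S)
    rwa [hcardS] at this
  have := Finset.kruskal_katona h𝒜 (by rw [hcount]; exact hcard) hinit
  rw [hshadow] at this
  exact this

end KKlemmas

section Numeric

/-- If `(m+1) * c^m ≤ (M-m)^(m+1)`, then `c.choose m ≤ M.choose (m+1)`. -/
lemma choose_le_choose_succ_of (c M m : ℕ) (h : (m + 1) * c ^ m ≤ (M - m) ^ (m + 1)) :
    c.choose m ≤ M.choose (m + 1) := by
  have h1 : c.descFactorial m ≤ c ^ m := Nat.descFactorial_le_pow c m
  have h2 : (M - m) ^ (m + 1) ≤ M.descFactorial (m + 1) := by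
    have := Nat.pow_sub_le_descFactorial M (m + 1)
    have heq : M + 1 - (m + 1) = M - m := by omega
    rwa [heq] at this
  have h3 : c.descFactorial m = m.factorial * c.choose m :=
    Nat.descFactorial_eq_factorial_mul_choose c m
  have h4 : M.descFactorial (m + 1) = (m + 1).factorial * M.choose (m + 1) :=
    Nat.descFactorial_eq_factorial_mul_choose M (m + 1)
  have key : (m + 1).factorial * c.choose m ≤ (m + 1).factorial * M.choose (m + 1) := by
    calc (m + 1).factorial * c.choose m
        = (m + 1) * (m.factorial * c.choose m) := by
          rw [Nat.factorial_succ]; ring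
      _ = (m + 1) * c.descFactorial m := by rw [h3]
      _ ≤ (m + 1) * c ^ m := Nat.mul_le_mul_left _ h1
      _ ≤ (M - m) ^ (m + 1) := h
      _ ≤ M.descFactorial (m + 1) := h2
      _ = (m + 1).factorial * M.choose (m + 1) := h4
  exact Nat.le_of_mul_le_mul_left key (Nat.factorial_pos _)

lemma pow_nine_ge (m : ℕ) (hm : 2 ≤ m) : 2 * 7 ^ (m + 1) ≤ 9 ^ (m + 1) := by
  induction m with
  | zero => omega
  | succ m ih =>
    rcases Nat.lt_or_ge m 2 with hm2 | hm2
    · have : m = 1 := by omega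
      subst this; norm_num
    · have h := ih hm2
      calc 2 * 7 ^ (m + 1 + 1) = 7 * (2 * 7 ^ (m + 1)) := by ring
        _ ≤ 7 * 9 ^ (m + 1) := Nat.mul_le_mul_left _ h
        _ ≤ 9 * 9 ^ (m + 1) := Nat.mul_le_mul_right _ (by norm_num)
        _ = 9 ^ (m + 1 + 1) := by ring

lemma nine_mul_le (n m : ℕ) (hm : 1 ≤ m) (hn : 3 ^ (m + 1) * (m + 1) ≤ n) :
    9 * (m + 1) ≤ n := by
  calc 9 * (m + 1) ≤ 3 ^ (m + 1) * (m + 1) := by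
        apply Nat.mul_le_mul_right
        calc (9:ℕ) = 3 ^ 2 := by norm_num
          _ ≤ 3 ^ (m + 1) := Nat.pow_le_pow_right (by norm_num) (by omega)
    _ ≤ n := hn

lemma numeric_N3 (n m : ℕ) (hm : 1 ≤ m) (hn : 3 ^ (m + 1) * (m + 1) ≤ n) :
    (n - 3).choose m ≤ (n - 4).choose (m + 1) := by
  have h9 : 9 * (m + 1) ≤ n := nine_mul_le n m hm hn
  apply choose_le_choose_succ_of
  have hA : 2 * (n - 3) ≤ 3 * (n - 4 - m) := by omega
  have hB : (2 * (n - 3)) ^ (m + 1) ≤ (3 * (n - 4 - m)) ^ (m + 1) :=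
    Nat.pow_le_pow_left hA _
  have hC : 3 ^ (m + 1) * (m + 1) ≤ 2 ^ (m + 1) * (n - 3) := by
    calc 3 ^ (m + 1) * (m + 1) ≤ n := hn
      _ ≤ 2 * (n - 3) := by omega
      _ ≤ 2 ^ (m + 1) * (n - 3) := by
          apply Nat.mul_le_mul_right
          calc (2:ℕ) = 2 ^ 1 := by norm_num
            _ ≤ 2 ^ (m + 1) := Nat.pow_le_pow_right (by norm_num) (by omega)
  have key : 3 ^ (m + 1) * ((m + 1) * (n - 3) ^ m) ≤ 3 ^ (m + 1) * (n - 4 - m) ^ (m + 1) := by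
    calc 3 ^ (m + 1) * ((m + 1) * (n - 3) ^ m)
        = (3 ^ (m + 1) * (m + 1)) * (n - 3) ^ m := by ring
      _ ≤ (2 ^ (m + 1) * (n - 3)) * (n - 3) ^ m := Nat.mul_le_mul_right _ hC
      _ = (2 * (n - 3)) ^ (m + 1) := by rw [mul_pow]; ring
      _ ≤ (3 * (n - 4 - m)) ^ (m + 1) := hB
      _ = 3 ^ (m + 1) * (n - 4 - m) ^ (m + 1) := by rw [mul_pow]
  exact Nat.le_of_mul_le_mul_left key (by positivity)

lemma numeric_N4 (n m : ℕ) (hm : 1 ≤ m) (hn : 3 ^ (m + 1) * (m + 1) ≤ n) :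
    (n - 3).choose m ≤ (n / 2 + m - 2).choose (m + 1) := by
  have h9 : 9 * (m + 1) ≤ n := nine_mul_le n m hm hn
  have hM : n / 2 + m - 2 - m = n / 2 - 2 := by omega
  apply choose_le_choose_succ_of
  rw [hM]
  rcases Nat.eq_or_lt_of_le hm with hm1 | hm2
  · -- m = 1 : need 2 * (n-3)^1 ≤ (n/2 - 2)^2
    subst hm1
    have h1 : 2 * (n - 3) ≤ 7 * (n / 2 - 2) := by omega
    have h2 : 7 ≤ n / 2 - 2 := by omega
    calc (1 + 1) * (n - 3) ^ 1 = 2 * (n - 3) := by ring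
      _ ≤ 7 * (n / 2 - 2) := h1
      _ ≤ (n / 2 - 2) * (n / 2 - 2) := Nat.mul_le_mul_right _ h2
      _ = (n / 2 - 2) ^ (1 + 1) := by ring
  · -- m ≥ 2
    have hm2' : 2 ≤ m := by omega
    have hA : 3 * (n - 3) ≤ 7 * (n / 2 - 2) := by omega
    have hB : (3 * (n - 3)) ^ (m + 1) ≤ (7 * (n / 2 - 2)) ^ (m + 1) :=
      Nat.pow_le_pow_left hA _
    have hC : 7 ^ (m + 1) * (m + 1) ≤ 3 ^ (m + 1) * (n - 3) := by
      have hpow := pow_nine_ge m hm2'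
      have e1 : 3 ^ (m + 1) * n ≤ 2 * (3 ^ (m + 1) * (n - 3)) := by
        have hx : n ≤ 2 * (n - 3) := by omega
        calc 3 ^ (m + 1) * n ≤ 3 ^ (m + 1) * (2 * (n - 3)) := Nat.mul_le_mul_left _ hx
          _ = 2 * (3 ^ (m + 1) * (n - 3)) := by ring
      have e2 : 9 ^ (m + 1) * (m + 1) ≤ 3 ^ (m + 1) * n := by
        calc 9 ^ (m + 1) * (m + 1) = 3 ^ (m + 1) * (3 ^ (m + 1) * (m + 1)) := by
              rw [show (9:ℕ) = 3 * 3 by norm_num, Nat.mul_pow]; ring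
          _ ≤ 3 ^ (m + 1) * n := Nat.mul_le_mul_left _ hn
      have e3 : 2 * (7 ^ (m + 1) * (m + 1)) ≤ 9 ^ (m + 1) * (m + 1) := by
        calc 2 * (7 ^ (m + 1) * (m + 1)) = (2 * 7 ^ (m + 1)) * (m + 1) := by ring
          _ ≤ 9 ^ (m + 1) * (m + 1) := Nat.mul_le_mul_right _ hpow
      omega
    have key : 7 ^ (m + 1) * ((m + 1) * (n - 3) ^ m) ≤ 7 ^ (m + 1) * (n / 2 - 2) ^ (m + 1) := by
      calc 7 ^ (m + 1) * ((m + 1) * (n - 3) ^ m)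
          = (7 ^ (m + 1) * (m + 1)) * (n - 3) ^ m := by ring
        _ ≤ (3 ^ (m + 1) * (n - 3)) * (n - 3) ^ m := Nat.mul_le_mul_right _ hC
        _ = (3 * (n - 3)) ^ (m + 1) := by rw [mul_pow]; ring
        _ ≤ (7 * (n / 2 - 2)) ^ (m + 1) := hB
        _ = 7 ^ (m + 1) * (n / 2 - 2) ^ (m + 1) := by rw [mul_pow]
    exact Nat.le_of_mul_le_mul_left key (by positivity)

end Numeric

lemma pascal_gen (x y X Y : ℕ) (hX : X = x + 1) (hY : Y = y + 1) :
    X.choose Y = x.choose y + x.choose (y + 1) := by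
  subst hX; subst hY
  exact Nat.choose_succ_succ' x y

section Flow
variable {n : ℕ}

def Rfam (n m : ℕ) (D : Finset (Finset (Fin n))) : ℕ → Finset (Finset (Fin n))
  | 0 => Finset.powersetCard (n - m) Finset.univ \ D
  | (j+1) => (∂ (Rfam n m D j)) \ D

lemma Rfam_not_mem {m : ℕ} {D : Finset (Finset (Fin n))} {j : ℕ} {X : Finset (Fin n)}
    (hX : X ∈ Rfam n m D j) : X ∉ D := by
  cases j <;> exact (Finset.mem_sdiff.1 hX).2

lemma Rfam_step {m : ℕ} {D : Finset (Finset (Fin n))} {j : ℕ} {X : Finset (Fin n)}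
    (hX : X ∈ Rfam n m D (j+1)) : ∃ Y ∈ Rfam n m D j, X ⊆ Y := by
  have h1 : X ∈ ∂ (Rfam n m D j) := (Finset.mem_sdiff.1 hX).1
  obtain ⟨Y, hY, a, ha, hXY⟩ := Finset.mem_shadow_iff.1 h1
  exact ⟨Y, hY, by rw [← hXY]; exact Finset.erase_subset _ _⟩

lemma Rfam_sized {m : ℕ} {D : Finset (Finset (Fin n))} :
    ∀ j, ∀ X ∈ Rfam n m D j, X.card = n - m - j := by
  intro j
  induction j with
  | zero =>
    intro X hX
    have := (Finset.mem_sdiff.1 hX).1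
    simpa using (Finset.mem_powersetCard.1 this).2
  | succ j ih =>
    intro X hX
    have h1 : X ∈ ∂ (Rfam n m D j) := (Finset.mem_sdiff.1 hX).1
    obtain ⟨Y, hY, a, ha, hXY⟩ := Finset.mem_shadow_iff.1 h1
    have hYc := ih Y hY
    rw [← hXY, Finset.card_erase_of_mem ha, hYc]
    omega

lemma Rfam_card_zero {m k : ℕ} {D : Finset (Finset (Fin n))}
    (hD : ∀ j, (D.filter (fun A => A.card = j)).card ≤ k) :
    n.choose (n - m) ≤ (Rfam n m D 0).card + k := by
  have hsub : Finset.powersetCard (n - m) Finset.univ \ D ⊇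
      Finset.powersetCard (n - m) Finset.univ \ (D.filter (fun A => A.card = n - m)) := by
    intro X hX
    rw [Finset.mem_sdiff] at *
    refine ⟨hX.1, fun hXD => hX.2 ?_⟩
    rw [Finset.mem_filter]
    exact ⟨hXD, by simpa using (Finset.mem_powersetCard.1 hX.1).2⟩
  calc n.choose (n - m)
      = (Finset.powersetCard (n - m) (Finset.univ : Finset (Fin n))).card := by
        rw [Finset.card_powersetCard, Finset.card_univ, Fintype.card_fin]
    _ ≤ (Finset.powersetCard (n - m) Finset.univ \
          (D.filter (fun A => A.card = n - m))).card
          + (D.filter (fun A => A.card = n - m)).card :=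
        Finset.card_le_card_sdiff_add_card
    _ ≤ (Rfam n m D 0).card + k :=
        Nat.add_le_add (Finset.card_le_card hsub) (hD _)

lemma Rfam_card_succ {m k : ℕ} {D : Finset (Finset (Fin n))} {j : ℕ}
    (hD : ∀ j, (D.filter (fun A => A.card = j)).card ≤ k) :
    (∂ (Rfam n m D j)).card ≤ (Rfam n m D (j+1)).card + k := by
  have hsub : (∂ (Rfam n m D j)) \ D ⊇
      (∂ (Rfam n m D j)) \ (D.filter (fun A => A.card = n - m - (j+1))) := by
    intro X hX
    rw [Finset.mem_sdiff] at *
    refine ⟨hX.1, fun hXD => hX.2 ?_⟩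
    rw [Finset.mem_filter]
    refine ⟨hXD, ?_⟩
    obtain ⟨Y, hY, a, ha, hXY⟩ := Finset.mem_shadow_iff.1 hX.1
    rw [← hXY, Finset.card_erase_of_mem ha, Rfam_sized j Y hY]
    omega
  calc (∂ (Rfam n m D j)).card
      ≤ ((∂ (Rfam n m D j)) \ (D.filter (fun A => A.card = n - m - (j+1)))).card
        + (D.filter (fun A => A.card = n - m - (j+1))).card :=
        Finset.card_le_card_sdiff_add_card
    _ ≤ (Rfam n m D (j+1)).card + k :=
        Nat.add_le_add (Finset.card_le_card hsub) (hD _)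

lemma Rfam_sized' {m : ℕ} {D : Finset (Finset (Fin n))} {j r : ℕ} (hr : r = n - m - j) :
    ((Rfam n m D j : Finset (Finset (Fin n))) : Set (Finset (Fin n))).Sized r := by
  intro X hX
  rw [hr]
  exact Rfam_sized j X hX

lemma flow_main (m k lam : ℕ) (hm : 1 ≤ m)
    (hn : 3 ^ (m + 1) * (m + 1) ≤ n)
    (hk : k ≤ (n - 3).choose m)
    (hkc : k ≤ (lam + m - 2).choose (m + 1))
    (hlam3 : 3 ≤ lam) (hlam : lam ≤ n - m - 2)
    (D : Finset (Finset (Fin n)))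
    (hD : ∀ j, (D.filter (fun A => A.card = j)).card ≤ k) :
    ∀ i, lam ≤ i → i ≤ n - m - 2 →
      (n-1).choose i + ((n-3).choose (i-1) + (i+m-2).choose (i-2))
        ≤ (Rfam n m D (n - m - i)).card := by
  have h9 : 9 * (m + 1) ≤ n := nine_mul_le n m hm hn
  obtain ⟨p, hp⟩ : ∃ p, n - m - 3 = p := ⟨n - m - 3, rfl⟩
  have hmn : m + 3 ≤ n := by omega
  have hpbig : 14 ≤ p := by omega
  -- P0
  have P0 : (n-1).choose (p+3) + ((n-2).choose (p+2) + (n-3).choose (p+1))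
      ≤ (Rfam n m D 0).card := by
    have hid : n.choose (n - m)
        = (n-1).choose (p+3) + ((n-2).choose (p+2) + ((n-3).choose (p+1) + (n-3).choose p)) := by
      have e0 : n - m = p + 3 := by omega
      have g1 : n.choose (p+3) = (n-1).choose (p+2) + (n-1).choose (p+3) :=
        pascal_gen (n-1) (p+2) _ _ (by omega) (by omega)
      have g2 : (n-1).choose (p+2) = (n-2).choose (p+1) + (n-2).choose (p+2) :=
        pascal_gen (n-2) (p+1) _ _ (by omega) (by omega)
      have g3 : (n-2).choose (p+1) = (n-3).choose p + (n-3).choose (p+1) :=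
        pascal_gen (n-3) p _ _ (by omega) (by omega)
      rw [e0]
      omega
    have hkp : k ≤ (n-3).choose p := by
      have : (n-3).choose p = (n-3).choose m := by
        have : p = (n - 3) - m := by omega
        rw [this]
        exact Nat.choose_symm (by omega)
      omega
    have h0 := Rfam_card_zero (m := m) (k := k) (D := D) hD
    omega
  -- P1
  have P1 : (n-1).choose (p+2) + (n-2).choose (p+1) ≤ (Rfam n m D 1).card := by
    have hsz : ((Rfam n m D 0 : Finset (Finset (Fin n))) : Set (Finset (Fin n))).Sized (p + 3) :=
      Rfam_sized' (by omega)
    have hkk := kk3 (m-1) (n-3) (n-2) (n-1) p (by omega) (by omega) (by omega) (by omega)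
      hsz (by exact P0)
    have hstep := Rfam_card_succ (m := m) (k := k) (D := D) (j := 0) hD
    rw [show (0:ℕ) + 1 = 1 by norm_num] at hstep
    have hkp : k ≤ (n-3).choose p := by
      have : (n-3).choose p = (n-3).choose m := by
        have : p = (n - 3) - m := by omega
        rw [this]
        exact Nat.choose_symm (by omega)
      omega
    omega
  -- P2
  have P2 : (n-1).choose (p+1) + ((n-3).choose p + (n-4).choose (p-1))
      ≤ (Rfam n m D 2).card := by
    have hsz : ((Rfam n m D 1 : Finset (Finset (Fin n))) : Set (Finset (Fin n))).Sized (p + 2) :=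
      Rfam_sized' (by omega)
    have hkk := kk2 m (n-2) (n-1) p (by omega) (by omega) (by omega) hsz (by exact P1)
    have hstep := Rfam_card_succ (m := m) (k := k) (D := D) (j := 1) hD
    rw [show (1:ℕ) + 1 = 2 by norm_num] at hstep
    -- Pascal: (n-2).choose p = (n-3).choose (p-1) + (n-3).choose p
    have hp1 : (n-2).choose p = (n-3).choose (p-1) + (n-3).choose ((p-1)+1) :=
      pascal_gen (n-3) (p-1) _ _ (by omega) (by omega)
    rw [show (p-1)+1 = p by omega] at hp1
    have hp2 : (n-3).choose (p-1) = (n-4).choose (p-2) + (n-4).choose ((p-2)+1) :=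
      pascal_gen (n-4) (p-2) _ _ (by omega) (by omega)
    rw [show (p-2)+1 = p-1 by omega] at hp2
    have hkp : k ≤ (n-4).choose (p-2) := by
      have hsym : (n-4).choose (p-2) = (n-4).choose (m+1) := by
        have : p - 2 = (n - 4) - (m+1) := by omega
        rw [this]
        exact Nat.choose_symm (by omega)
      have hN3 := numeric_N3 n m hm hn
      rw [hsym]
      exact le_trans hk hN3
    omega
  -- generic step
  have S3 : ∀ i, lam ≤ i → i ≤ n - m - 3 →
      ((n-1).choose (i+1) + ((n-3).choose i + (i+m-1).choose (i-1))
        ≤ (Rfam n m D (n-m-i-1)).card) →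
      ((n-1).choose i + ((n-3).choose (i-1) + (i+m-2).choose (i-2))
        ≤ (Rfam n m D (n-m-i)).card) := by
    intro i hi1 hi2 IH
    have hsz : ((Rfam n m D (n-m-i-1) : Finset (Finset (Fin n))) :
        Set (Finset (Fin n))).Sized ((i-2) + 3) := Rfam_sized' (by omega)
    have hcard : (n-1).choose ((i-2)+3) + ((n-3).choose ((i-2)+2)
        + (i+m-1).choose ((i-2)+1)) ≤ (Rfam n m D (n-m-i-1)).card := by
      rw [show (i-2)+3 = i+1 by omega, show (i-2)+2 = i by omega,
        show (i-2)+1 = i-1 by omega]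
      exact IH
    have hkk := kk3 m (i+m-1) (n-3) (n-1) (i-2) (by omega) (by omega) (by omega) (by omega)
      hsz hcard
    rw [show (i-2)+2 = i by omega, show (i-2)+1 = i-1 by omega] at hkk
    have hstep := Rfam_card_succ (m := m) (k := k) (D := D) (j := n-m-i-1) hD
    rw [show n-m-i-1+1 = n-m-i by omega] at hstep
    have hPasc : (i+m-1).choose (i-2) = (i+m-2).choose (i-3) + (i+m-2).choose ((i-3)+1) :=
      pascal_gen (i+m-2) (i-3) _ _ (by omega) (by omega)
    rw [show (i-3)+1 = i-2 by omega] at hPasc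
    have hkle : k ≤ (i+m-2).choose (i-3) := by
      have hsym : (i+m-2).choose (i-3) = (i+m-2).choose (m+1) := by
        have : i - 3 = (i+m-2) - (m+1) := by omega
        rw [this]
        exact Nat.choose_symm (by omega)
      rw [hsym]
      exact le_trans hkc (Nat.choose_le_choose (m+1) (by omega))
    omega
  -- downward induction
  have main : ∀ d, ∀ i, lam ≤ i → i = n - m - 2 - d →
      (n-1).choose i + ((n-3).choose (i-1) + (i+m-2).choose (i-2))
        ≤ (Rfam n m D (n - m - i)).card := by
    intro d
    induction d with
    | zero =>
      intro i hi1 hieq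
      have hieq2 : i = n - m - 2 := by omega
      subst hieq2
      rw [show n - m - (n-m-2) = 2 by omega, show (n-m-2)+m-2 = n-4 by omega,
        show (n-m-2)-2 = p-1 by omega, show (n-m-2)-1 = p by omega,
        show n-m-2 = p+1 by omega]
      exact P2
    | succ d ih =>
      intro i hi1 hieq
      have hi2 : i ≤ n - m - 3 := by omega
      have hIH := ih (i+1) (by omega) (by omega)
      rw [show (i+1)-1 = i by omega, show (i+1)+m-2 = i+m-1 by omega,
        show (i+1)-2 = i-1 by omega] at hIH
      have := S3 i hi1 hi2 (by
        rw [show n-m-i-1 = n-m-(i+1) by omega]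
        exact hIH)
      exact this
  intro i hi1 hi2
  exact main (n - m - 2 - i) i hi1 (by omega)

lemma Rfam_chain {m : ℕ} {D : Finset (Finset (Fin n))} :
    ∀ {j : ℕ} {X : Finset (Fin n)}, X ∈ Rfam n m D j →
    ∃ E : ℕ → Finset (Fin n), E j = X ∧ (∀ l, l ≤ j → E l ∈ Rfam n m D l) ∧
      (∀ l, l < j → E (l+1) ⊆ E l) := by
  intro j
  induction j with
  | zero =>
    intro X hX
    refine ⟨fun _ => X, rfl, ?_, ?_⟩
    · intro l hl
      have : l = 0 := by omega
      subst this
      exact hX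
    · intro l hl
      omega
  | succ j ih =>
    intro X hX
    obtain ⟨Y, hY, hXY⟩ := Rfam_step hX
    obtain ⟨E', hE'j, hE'mem, hE'chain⟩ := ih hY
    refine ⟨fun l => if l = j + 1 then X else E' l, by simp, ?_, ?_⟩
    · intro l hl
      dsimp only
      by_cases h : l = j + 1
      · rw [if_pos h, h]; exact hX
      · rw [if_neg h]; exact hE'mem l (by omega)
    · intro l hl
      dsimp only
      by_cases h : l + 1 = j + 1
      · have hlj : l = j := by omega
        subst hlj
        rw [if_pos rfl, if_neg (by omega : ¬ l = l + 1), hE'j]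
        exact hXY
      · rw [if_neg h, if_neg (by omega : ¬ l = j + 1)]
        exact hE'chain l (by omega)

lemma Dcompl_levels {k : ℕ} (D : Finset (Finset (Fin n)))
    (hD : ∀ j, (D.filter (fun A => A.card = j)).card ≤ k) :
    ∀ j, ((D.image (fun A => Aᶜ)).filter (fun A => A.card = j)).card ≤ k := by
  intro j
  have hsub : (D.image (fun A => Aᶜ)).filter (fun A => A.card = j)
      ⊆ (D.filter (fun A => A.card = n - j)).image (fun A => Aᶜ) := by
    intro X hX
    rw [Finset.mem_filter, Finset.mem_image] at hX
    obtain ⟨⟨A, hA, rfl⟩, hcard⟩ := hX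
    rw [Finset.mem_image]
    refine ⟨A, Finset.mem_filter.2 ⟨hA, ?_⟩, rfl⟩
    rw [Finset.card_compl, Fintype.card_fin] at hcard
    have := Finset.card_le_card (Finset.subset_univ A)
    rw [Finset.card_univ, Fintype.card_fin] at this
    omega
  calc ((D.image (fun A => Aᶜ)).filter (fun A => A.card = j)).card
      ≤ ((D.filter (fun A => A.card = n - j)).image (fun A => Aᶜ)).card :=
        Finset.card_le_card hsub
    _ ≤ (D.filter (fun A => A.card = n - j)).card := Finset.card_image_le
    _ ≤ k := hD _

lemma exists_middle_chain (m k : ℕ) (hm : 1 ≤ m)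
    (hn : 3 ^ (m + 1) * (m + 1) ≤ n)
    (hk : k ≤ (n - 3).choose m)
    (D : Finset (Finset (Fin n)))
    (hD : ∀ j, (D.filter (fun A => A.card = j)).card ≤ k) :
    ∃ W : ℕ → Finset (Fin n),
      (∀ i, m ≤ i → i ≤ n - m → (W i).card = i ∧ W i ∉ D) ∧
      (∀ i, m ≤ i → i < n - m → W i ⊆ W (i + 1)) := by
  classical
  have h9 : 9 * (m + 1) ≤ n := nine_mul_le n m hm hn
  set lam1 := n / 2 with hlam1
  set lam2 := n - n / 2 with hlam2
  have hl12 : lam1 ≤ lam2 := by omega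
  have hlam2b : lam2 ≤ n - m - 2 := by omega
  have hlam1b : lam1 ≤ n - m - 2 := by omega
  have hl3 : 3 ≤ lam1 := by omega
  -- the D-run
  have hkc2 : k ≤ (lam2 + m - 2).choose (m + 1) := by
    have := numeric_N4 n m hm hn
    have hmono := Nat.choose_le_choose (m + 1) (show lam1 + m - 2 ≤ lam2 + m - 2 by omega)
    have : (n - 3).choose m ≤ (lam2 + m - 2).choose (m+1) := by
      have heq : n / 2 + m - 2 = lam1 + m - 2 := by omega
      rw [heq] at this
      omega
    omega
  have hkc1 : k ≤ (lam1 + m - 2).choose (m + 1) := by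
    have := numeric_N4 n m hm hn
    have heq : n / 2 + m - 2 = lam1 + m - 2 := by omega
    rw [heq] at this
    omega
  set D' := D.image (fun A => Aᶜ) with hD'
  have hD'lev := Dcompl_levels (k := k) D hD
  have hT := flow_main m k lam2 hm hn hk hkc2 (by omega) hlam2b D hD lam2 le_rfl hlam2b
  have hU := flow_main m k lam1 hm hn hk hkc1 (by omega) hlam1b D' hD'lev lam1 le_rfl hlam1b
  set T := Rfam n m D (n - m - lam2) with hTdef
  set U' := Rfam n m D' (n - m - lam1) with hU'def
  set U := U'.image (fun A => Aᶜ) with hUdef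
  -- cardinality lower bounds
  have hTcard : (n-1).choose lam2 + 1 ≤ T.card := by
    have hpos : 0 < (n-3).choose (lam2 - 1) :=
      Nat.choose_pos (by omega)
    omega
  have hU'card : (n-1).choose lam1 + 1 ≤ U'.card := by
    have hpos : 0 < (n-3).choose (lam1 - 1) :=
      Nat.choose_pos (by omega)
    omega
  have hUcard : (n-1).choose lam1 + 1 ≤ U.card := by
    rw [hUdef, Finset.card_image_of_injective _ compl_injective]
    exact hU'card
  -- both inside powersetCard lam2 univ
  have hTsub : T ⊆ Finset.powersetCard lam2 Finset.univ := by
    intro X hX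
    rw [Finset.mem_powersetCard]
    refine ⟨Finset.subset_univ _, ?_⟩
    have := Rfam_sized (n := n) (m := m) (D := D) (n - m - lam2) X hX
    omega
  have hUsub : U ⊆ Finset.powersetCard lam2 Finset.univ := by
    intro X hX
    rw [hUdef, Finset.mem_image] at hX
    obtain ⟨A, hA, rfl⟩ := hX
    rw [Finset.mem_powersetCard]
    refine ⟨Finset.subset_univ _, ?_⟩
    have := Rfam_sized (n := n) (m := m) (D := D') (n - m - lam1) A hA
    rw [Finset.card_compl, Fintype.card_fin]
    omega
  -- meet: T ∩ U nonempty
  have hmeet : (T ∩ U).Nonempty := by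
    by_contra hempty
    rw [Finset.not_nonempty_iff_eq_empty] at hempty
    have hid : (n-1).choose lam2 + (n-1).choose lam1 = n.choose lam2 := by
      have hsym : (n-1).choose lam1 = (n-1).choose (lam2 - 1) := by
        have e1 : lam1 = (n-1) - (lam2 - 1) := by omega
        rw [e1]
        exact Nat.choose_symm (by omega)
      have hpas : n.choose lam2 = (n-1).choose (lam2 - 1) + (n-1).choose ((lam2-1)+1) :=
        pascal_gen (n-1) (lam2-1) _ _ (by omega) (by omega)
      rw [show (lam2-1)+1 = lam2 by omega] at hpas
      omega
    have hunion : (T ∪ U).card = T.card + U.card := by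
      rw [Finset.card_union_of_disjoint (Finset.disjoint_iff_inter_eq_empty.2 hempty)]
    have hle : (T ∪ U).card ≤ n.choose lam2 := by
      calc (T ∪ U).card ≤ (Finset.powersetCard lam2 (Finset.univ : Finset (Fin n))).card :=
            Finset.card_le_card (Finset.union_subset hTsub hUsub)
        _ = n.choose lam2 := by
            rw [Finset.card_powersetCard, Finset.card_univ, Fintype.card_fin]
    omega
  obtain ⟨X, hXmeet⟩ := hmeet
  have hXT : X ∈ T := (Finset.mem_inter.1 hXmeet).1
  have hXU : X ∈ U := (Finset.mem_inter.1 hXmeet).2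
  obtain ⟨X', hX', hXX'⟩ := Finset.mem_image.1 hXU
  -- chains
  obtain ⟨ET, hETj, hETmem, hETchain⟩ := Rfam_chain (m := m) (D := D) hXT
  obtain ⟨EU, hEUj, hEUmem, hEUchain⟩ := Rfam_chain (m := m) (D := D') hX'
  refine ⟨fun i => if i ≤ lam2 then (EU (i - m))ᶜ else ET (n - m - i), ?_, ?_⟩
  · intro i hi1 hi2
    by_cases h : i ≤ lam2
    · simp only [if_pos h]
      have hmem : EU (i - m) ∈ Rfam n m D' (i - m) := hEUmem (i - m) (by omega)
      have hsz := Rfam_sized (n := n) (m := m) (D := D') (i - m) _ hmem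
      constructor
      · rw [Finset.card_compl, Fintype.card_fin]; omega
      · intro hcontra
        have : (EU (i-m))ᶜᶜ ∈ D' := by
          rw [hD', Finset.mem_image]
          exact ⟨(EU (i-m))ᶜ, hcontra, rfl⟩
        rw [compl_compl] at this
        exact Rfam_not_mem hmem this
    · simp only [if_neg h]
      have hmem : ET (n - m - i) ∈ Rfam n m D (n - m - i) := hETmem (n - m - i) (by omega)
      have hsz := Rfam_sized (n := n) (m := m) (D := D) (n - m - i) _ hmem
      exact ⟨by omega, Rfam_not_mem hmem⟩
  · intro i hi1 hi2
    by_cases h1 : i + 1 ≤ lam2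
    · simp only [if_pos h1, if_pos (by omega : i ≤ lam2)]
      have hsub : EU ((i - m) + 1) ⊆ EU (i - m) := hEUchain (i - m) (by omega)
      rw [show i + 1 - m = (i - m) + 1 by omega]
      exact compl_subset_compl.2 hsub
    · by_cases h2 : i ≤ lam2
      · -- i = lam2 boundary
        have hieq : i = lam2 := by omega
        simp only [if_pos h2, if_neg h1]
        have hX'val : EU (i - m) = X' := by
          rw [hieq, show lam2 - m = n - m - lam1 by omega, hEUj]
        have hXval : (EU (i - m))ᶜ = X := by rw [hX'val, hXX']
        rw [hXval]
        have hchain := hETchain (n - m - (i+1)) (by omega)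
        rw [show n - m - (i+1) + 1 = n - m - i by omega,
          show n - m - i = n - m - lam2 by omega, hETj] at hchain
        exact hchain
      · simp only [if_neg h1, if_neg h2]
        have hchain := hETchain (n - m - (i+1)) (by omega)
        rw [show n - m - (i+1) + 1 = n - m - i by omega] at hchain
        exact hchain

end Flow

section NatChains
open Finset

lemma chain_down (B : Finset ℕ) : ∃ w : ℕ → Finset ℕ, w B.card = B ∧
    (∀ j ≤ B.card, (w j).card = j ∧ w j ⊆ B) ∧ (∀ j < B.card, w j ⊆ w (j+1)) := by
  classical
  obtain ⟨c, hc⟩ : ∃ c, B.card = c := ⟨_, rfl⟩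
  induction c generalizing B with
  | zero =>
    refine ⟨fun _ => B, rfl, ?_, ?_⟩
    · intro j hj
      have hj0 : j = 0 := by omega
      subst hj0
      dsimp only
      exact ⟨by omega, subset_rfl⟩
    · intro j hj; omega
  | succ c ih =>
    have hne : B.Nonempty := by rw [← Finset.card_pos]; omega
    obtain ⟨x, hx⟩ := hne
    have hBc : (B.erase x).card = c := by rw [Finset.card_erase_of_mem hx]; omega
    obtain ⟨w', hw'B, hw'card, hw'chain⟩ := ih (B.erase x) hBc
    refine ⟨fun j => if j = c + 1 then B else w' j, ?_, ?_, ?_⟩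
    · dsimp only
      rw [hc, if_pos rfl]
    · intro j hj
      dsimp only
      by_cases h : j = c + 1
      · subst h; rw [if_pos rfl]; exact ⟨by omega, subset_rfl⟩
      · rw [if_neg h]
        have hj' : j ≤ c := by omega
        obtain ⟨h1, h2⟩ := hw'card j (by omega)
        exact ⟨h1, h2.trans (Finset.erase_subset _ _)⟩
    · intro j hj
      dsimp only
      by_cases h : j + 1 = c + 1
      · have hjc : j = c := by omega
        rw [if_neg (show ¬ j = c + 1 by omega), if_pos h]
        have hw'c : w' c = B.erase x := by rw [← hBc]; exact hw'B
        rw [hjc, hw'c]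
        exact Finset.erase_subset _ _
      · rw [if_neg h, if_neg (show ¬ j = c + 1 by omega)]
        exact hw'chain j (by omega)

lemma chain_up (B C : Finset ℕ) (hBC : B ⊆ C) : ∃ w : ℕ → Finset ℕ,
    w B.card = B ∧ w C.card = C ∧
    (∀ j, B.card ≤ j → j ≤ C.card → (w j).card = j ∧ B ⊆ w j ∧ w j ⊆ C) ∧
    (∀ j, B.card ≤ j → j < C.card → w j ⊆ w (j+1)) := by
  classical
  obtain ⟨w', hw'top, hw'card, hw'chain⟩ := chain_down (C \ B)
  have hdcard : (C \ B).card = C.card - B.card := Finset.card_sdiff_of_subset hBC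
  have hBle : B.card ≤ C.card := Finset.card_le_card hBC
  refine ⟨fun j => B ∪ w' (j - B.card), ?_, ?_, ?_, ?_⟩
  · dsimp only
    rw [Nat.sub_self]
    obtain ⟨h1, _⟩ := hw'card 0 (Nat.zero_le _)
    rw [Finset.card_eq_zero.1 h1, Finset.union_empty]
  · dsimp only
    rw [show C.card - B.card = (C \ B).card by omega, hw'top]
    exact Finset.union_sdiff_of_subset hBC
  · intro j hj1 hj2
    dsimp only
    obtain ⟨h1, h2⟩ := hw'card (j - B.card) (by omega)
    have hdisj : Disjoint B (w' (j - B.card)) := by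
      apply Finset.disjoint_left.2
      intro a haB haw
      exact (Finset.mem_sdiff.1 (h2 haw)).2 haB
    refine ⟨?_, Finset.subset_union_left, ?_⟩
    · rw [Finset.card_union_of_disjoint hdisj, h1]; omega
    · apply Finset.union_subset hBC
      exact h2.trans (Finset.sdiff_subset)
  · intro j hj1 hj2
    dsimp only
    apply Finset.union_subset_union_right
    rw [show j + 1 - B.card = (j - B.card) + 1 by omega]
    exact hw'chain (j - B.card) (by omega)

end NatChains

section Transfer
open Finset

variable {n : ℕ}

def natEmb (n : ℕ) : Fin n ↪ ℕ :=
  ⟨fun x => (x : ℕ) + 1, fun a b h => by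
    have h' : (a : ℕ) + 1 = (b : ℕ) + 1 := h
    apply Fin.val_injective
    omega⟩

lemma sigma_card (W : Finset (Fin n)) : (W.map (natEmb n)).card = W.card :=
  Finset.card_map _

lemma sigma_sub (W : Finset (Fin n)) : W.map (natEmb n) ⊆ Finset.Icc 1 n := by
  intro y hy
  rw [Finset.mem_map] at hy
  obtain ⟨x, _, rfl⟩ := hy
  simp only [natEmb, Function.Embedding.coeFn_mk, Finset.mem_Icc]
  have := x.2
  show 1 ≤ (x : ℕ) + 1 ∧ (x : ℕ) + 1 ≤ n
  omega

lemma tau_sigma (W : Finset (Fin n)) :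
    Finset.univ.filter (fun x : Fin n => ((x : ℕ) + 1) ∈ W.map (natEmb n)) = W := by
  ext x
  simp only [Finset.mem_filter, Finset.mem_univ, true_and, Finset.mem_map, natEmb,
    Function.Embedding.coeFn_mk]
  constructor
  · rintro ⟨z, hz, hzx⟩
    have : z = x := by have hzx' : (z : ℕ) + 1 = x + 1 := hzx; apply Fin.val_injective; omega
    rwa [← this]
  · intro hx
    exact ⟨x, hx, rfl⟩

lemma sigma_tau (A : Finset ℕ) (hA : A ⊆ Finset.Icc 1 n) :
    (Finset.univ.filter (fun x : Fin n => ((x : ℕ) + 1) ∈ A)).map (natEmb n) = A := by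
  ext y
  simp only [Finset.mem_map, Finset.mem_filter, Finset.mem_univ, true_and, natEmb,
    Function.Embedding.coeFn_mk]
  constructor
  · rintro ⟨x, hx, rfl⟩
    exact hx
  · intro hy
    have hy' := Finset.mem_Icc.1 (hA hy)
    refine ⟨⟨y - 1, by omega⟩, ?_, ?_⟩
    · show (y - 1) + 1 ∈ A
      rw [show y - 1 + 1 = y by omega]
      exact hy
    · show (y - 1) + 1 = y
      omega

lemma cutset_contradiction (n m k : ℕ) (hm : 1 ≤ m) (hn : 3 ^ (m + 1) * (m + 1) ≤ n)
    (C : Finset (Finset ℕ)) (hcut : IsCutsetIn n C)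
    (hlev : ∀ A ∈ C, m ≤ A.card ∧ A.card ≤ n - m)
    (hcount : ∀ j, ((C.filter fun A => A.card = j).card ≤ k))
    (hk : k ≤ (n - 3).choose m) : False := by
  classical
  have h9 : 9 * (m + 1) ≤ n := nine_mul_le n m hm hn
  set τ : Finset ℕ → Finset (Fin n) :=
    fun A => Finset.univ.filter (fun x : Fin n => ((x : ℕ) + 1) ∈ A) with hτ
  set D : Finset (Finset (Fin n)) := C.image τ with hDdef
  have hDlev : ∀ j, ((D.filter fun A => A.card = j).card ≤ k) := by
    intro j
    have hsub : D.filter (fun A => A.card = j) ⊆ (C.filter fun A => A.card = j).image τ := by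
      intro X hX
      rw [Finset.mem_filter, hDdef, Finset.mem_image] at hX
      obtain ⟨⟨A, hA, rfl⟩, hcard⟩ := hX
      rw [Finset.mem_image]
      refine ⟨A, Finset.mem_filter.2 ⟨hA, ?_⟩, rfl⟩
      have hAsub := hcut.1 A hA
      have : (τ A).card = A.card := by
        have h1 := sigma_card (n := n) (τ A)
        rw [hτ] at *
        rw [sigma_tau A hAsub] at h1
        omega
      omega
    calc (D.filter fun A => A.card = j).card
        ≤ ((C.filter fun A => A.card = j).image τ).card := Finset.card_le_card hsub
      _ ≤ (C.filter fun A => A.card = j).card := Finset.card_image_le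
      _ ≤ k := hcount j
  obtain ⟨W, hWprop, hWmono⟩ := exists_middle_chain m k hm hn hk D hDlev
  set Bm : Finset ℕ := (W m).map (natEmb n) with hBm
  set Btop : Finset ℕ := (W (n - m)).map (natEmb n) with hBtop
  have hBmcard : Bm.card = m := by
    rw [hBm, sigma_card]
    exact (hWprop m le_rfl (by omega)).1
  have hBtopcard : Btop.card = n - m := by
    rw [hBtop, sigma_card]
    exact (hWprop (n - m) (by omega) le_rfl).1
  obtain ⟨w1, hw1B, hw1card, hw1chain⟩ := chain_down Bm
  obtain ⟨w2, hw2B, hw2top, hw2card, hw2chain⟩ := chain_up Btop (Finset.Icc 1 n)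
    (sigma_sub _)
  have hIcc : (Finset.Icc 1 n).card = n := by
    rw [Nat.card_Icc]; omega
  set c : ℕ → Finset ℕ :=
    fun i => if i < m then w1 i else if i ≤ n - m then (W i).map (natEmb n) else w2 i with hc
  have hchain : IsMaxChainIn n c := by
    refine ⟨?_, ?_, ?_⟩
    · intro i hi
      rw [hc]
      dsimp only
      by_cases h1 : i < m
      · rw [if_pos h1]
        exact (hw1card i (by omega)).1
      · rw [if_neg h1]
        by_cases h2 : i ≤ n - m
        · rw [if_pos h2, sigma_card]
          exact (hWprop i (by omega) h2).1
        · rw [if_neg h2]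
          exact (hw2card i (by omega) (by omega)).1
    · intro i hi
      rw [hc]
      dsimp only
      by_cases h1 : i + 1 < m
      · rw [if_pos (by omega : i < m), if_pos h1]
        exact hw1chain i (by omega)
      · by_cases h2 : i < m
        · -- i + 1 = m
          have him : i + 1 = m := by omega
          rw [if_pos h2, if_neg (by omega : ¬ i + 1 < m), if_pos (by omega : i + 1 ≤ n - m)]
        
          have hstep := hw1chain i (by omega)
          rw [him] at hstep
          have hW1m : w1 m = Bm := by rw [← hBmcard]; exact hw1B
          rw [him, ← hBm, ← hW1m]
          exact hstep
        · rw [if_neg h2, if_neg (by omega : ¬ i + 1 < m)]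
          by_cases h3 : i + 1 ≤ n - m
          · rw [if_pos h3, if_pos (by omega : i ≤ n - m)]
            exact Finset.map_subset_map.2 (hWmono i (by omega) (by omega))
          · by_cases h4 : i ≤ n - m
            · -- i = n - m
              have hieq : i = n - m := by omega
              rw [if_pos h4, if_neg h3]
              have hW2top : w2 (n - m) = Btop := by rw [← hBtopcard]; exact hw2B
              rw [hieq, ← hBtop, ← hW2top]
              exact hw2chain (n - m) (by omega) (by omega)
            · rw [if_neg h4, if_neg (by omega : ¬ i + 1 ≤ n - m)]
              exact hw2chain i (by omega) (by omega)
    · rw [hc]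
      dsimp only
      rw [if_neg (by omega : ¬ n < m), if_neg (by omega : ¬ n ≤ n - m)]
      conv_lhs => rw [← hIcc]
      exact hw2top
  obtain ⟨i, hi, hmem⟩ := hcut.2 c hchain
  rw [hc] at hmem
  dsimp only at hmem
  by_cases h1 : i < m
  · rw [if_pos h1] at hmem
    have := (hlev _ hmem).1
    have := (hw1card i (by omega)).1
    omega
  · rw [if_neg h1] at hmem
    by_cases h2 : i ≤ n - m
    · rw [if_pos h2] at hmem
      have hτmem : τ ((W i).map (natEmb n)) ∈ D := by
        rw [hDdef, Finset.mem_image]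
        exact ⟨_, hmem, rfl⟩
      rw [hτ] at hτmem
      dsimp only at hτmem
      rw [tau_sigma] at hτmem
      exact (hWprop i (by omega) h2).2 hτmem
    · rw [if_neg h2] at hmem
      have := (hlev _ hmem).2
      have := (hw2card i (by omega) (by omega)).1
      omega

end Transfer

section Final
open Finset

lemma choose_mono_le_half (n a : ℕ) : ∀ b, a ≤ b → 2 * b ≤ n →
    n.choose a ≤ n.choose b := by
  intro b hab
  induction b, hab using Nat.le_induction with
  | base => intro _; exact le_rfl
  | succ b hb ih =>
    intro h2
    have hstep : n.choose b ≤ n.choose (b + 1) :=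
      Nat.choose_le_succ_of_lt_half_left (by omega)
    exact le_trans (ih (by omega)) hstep

lemma choose_middle_ge (n m i : ℕ) (h1 : m ≤ i) (h2 : i ≤ n - m) (hmn : 2 * m ≤ n) :
    n.choose m ≤ n.choose i := by
  by_cases h : 2 * i ≤ n
  · exact choose_mono_le_half n m i h1 h
  · have hsym : n.choose i = n.choose (n - i) := (Nat.choose_symm (by omega)).symm
    rw [hsym]
    exact choose_mono_le_half n m (n - i) (by omega) (by omega)

lemma maxchain_mono {n : ℕ} {c : ℕ → Finset ℕ} (hc : IsMaxChainIn n c) :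
    ∀ i j, i ≤ j → j ≤ n → c i ⊆ c j := by
  intro i j hij
  induction j, hij using Nat.le_induction with
  | base => intro _; exact subset_rfl
  | succ j hj ih =>
    intro hjn
    exact (ih (by omega)).trans (hc.2.1 j (by omega))

lemma gcut_set_nonempty (n m : ℕ) (hm : 1 ≤ m) (h9 : 9 * (m + 1) ≤ n) :
    n.choose m ∈ {k : ℕ | ∃ C : Finset (Finset ℕ), IsCutsetIn n C ∧
      (∀ A ∈ C, m ≤ A.card ∧ A.card ≤ n - m) ∧
      ∀ i : ℕ, m ≤ i → i ≤ n - m → (C.filter fun A => A.card = i).card = n.choose m} := by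
  classical
  set K := n.choose m with hK
  have hIcc : (Finset.Icc 1 n).card = n := by rw [Nat.card_Icc]; omega
  have hFex : ∀ i, m ≤ i → i ≤ n - m →
      ∃ F : Finset (Finset ℕ), F ⊆ Finset.powersetCard i (Finset.Icc 1 n) ∧ F.card = K := by
    intro i hi1 hi2
    apply Finset.exists_subset_card_eq
    rw [Finset.card_powersetCard, hIcc]
    exact choose_middle_ge n m i hi1 hi2 (by omega)
  set G : ℕ → Finset (Finset ℕ) := fun i =>
    if h : m ≤ i ∧ i ≤ n - m then
      (if i = m then Finset.powersetCard m (Finset.Icc 1 n)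
       else (hFex i h.1 h.2).choose)
    else ∅ with hG
  have hGsub : ∀ i, G i ⊆ Finset.powersetCard i (Finset.Icc 1 n) := by
    intro i
    rw [hG]
    dsimp only
    by_cases h : m ≤ i ∧ i ≤ n - m
    · rw [dif_pos h]
      by_cases h2 : i = m
      · rw [if_pos h2, h2]
      · rw [if_neg h2]
        exact (hFex i h.1 h.2).choose_spec.1
    · rw [dif_neg h]
      exact Finset.empty_subset _
  have hGcard : ∀ i, m ≤ i → i ≤ n - m → (G i).card = K := by
    intro i h1 h2
    rw [hG]
    dsimp only
    rw [dif_pos ⟨h1, h2⟩]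
    by_cases h3 : i = m
    · rw [if_pos h3, Finset.card_powersetCard, hIcc, hK]
    · rw [if_neg h3]
      exact (hFex i h1 h2).choose_spec.2
  set CC : Finset (Finset ℕ) := (Finset.Icc m (n - m)).biUnion G with hCC
  have hmemCC : ∀ A, A ∈ CC ↔ ∃ i, m ≤ i ∧ i ≤ n - m ∧ A ∈ G i := by
    intro A
    rw [hCC, Finset.mem_biUnion]
    constructor
    · rintro ⟨i, hi, hA⟩
      rw [Finset.mem_Icc] at hi
      exact ⟨i, hi.1, hi.2, hA⟩
    · rintro ⟨i, h1, h2, hA⟩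
      exact ⟨i, Finset.mem_Icc.2 ⟨h1, h2⟩, hA⟩
  have hcardG : ∀ i A, A ∈ G i → A.card = i ∧ A ⊆ Finset.Icc 1 n := by
    intro i A hA
    have := Finset.mem_powersetCard.1 (hGsub i hA)
    exact ⟨this.2, this.1⟩
  refine ⟨CC, ⟨?_, ?_⟩, ?_, ?_⟩
  · intro A hA
    obtain ⟨i, _, _, hAi⟩ := (hmemCC A).1 hA
    exact (hcardG i A hAi).2
  · intro c hc
    refine ⟨m, by omega, ?_⟩
    have hcm : c m ∈ G m := by
      rw [hG]
      dsimp only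
      rw [dif_pos ⟨le_rfl, by omega⟩, if_pos rfl, Finset.mem_powersetCard]
      constructor
      · have := maxchain_mono hc m n (by omega) le_rfl
        rwa [hc.2.2] at this
      · exact hc.1 m (by omega)
    exact (hmemCC (c m)).2 ⟨m, le_rfl, by omega, hcm⟩
  · intro A hA
    obtain ⟨i, h1, h2, hAi⟩ := (hmemCC A).1 hA
    have := (hcardG i A hAi).1
    omega
  · intro i h1 h2
    have hfilter : CC.filter (fun A => A.card = i) = G i := by
      ext A
      rw [Finset.mem_filter, hmemCC]
      constructor
      · rintro ⟨⟨i', h1', h2', hAi'⟩, hcard⟩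
        have := (hcardG i' A hAi').1
        have : i' = i := by omega
        rwa [← this]
      · intro hA
        exact ⟨⟨i, h1, h2, hA⟩, (hcardG i A hA).1⟩
    rw [hfilter]
    exact hGcard i h1 h2

/-- For `m ≥ 1` and `n ≥ 3^{m+1}(m+1)`, one has `C(n-3,m) < g_n(m,n-m)`. -/
theorem gcut_symmetric_lower_bound (n m : ℕ) (hm : 1 ≤ m)
    (hn : 3 ^ (m + 1) * (m + 1) ≤ n) :
    (n - 3).choose m < gcut n m (n - m) := by
  have h9 : 9 * (m + 1) ≤ n := nine_mul_le n m hm hn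
  set S := {k : ℕ | ∃ C : Finset (Finset ℕ), IsCutsetIn n C ∧
    (∀ A ∈ C, m ≤ A.card ∧ A.card ≤ n - m) ∧
    ∀ i : ℕ, m ≤ i → i ≤ n - m → (C.filter fun A => A.card = i).card = k} with hS
  have hSne : S.Nonempty := ⟨n.choose m, gcut_set_nonempty n m hm h9⟩
  have hmem : gcut n m (n - m) ∈ S := Nat.sInf_mem hSne
  obtain ⟨C, hcut, hlev, hcount⟩ := hmem
  by_contra hcon
  push_neg at hcon
  set k := gcut n m (n - m) with hk
  have hcount' : ∀ j, ((C.filter fun A => A.card = j).card ≤ k) := by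
    intro j
    by_cases h : m ≤ j ∧ j ≤ n - m
    · rw [hcount j h.1 h.2]
    · have : C.filter (fun A => A.card = j) = ∅ := by
        rw [Finset.filter_eq_empty_iff]
        intro A hA hcard
        have := hlev A hA
        omega
      rw [this]
      simp
  exact cutset_contradiction n m k hm hn C hcut hlev hcount' hcon

end Final
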